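/- Let T be a closed operator in a Hilbert space H. Then the approximate point spectrum satisfies σ_app(T) ⊆ ⋂_{B ∈ L(H)} W(BT, B), where W(BT,B) := { λ : 0 ∈ closure(W(BT − λB)) }. -/

import Mathlib

open Filter Topology

variable {H : Type*} [NormedAddCommGroup H] [InnerProductSpace ℂ H] [CompleteSpace H]

/-- The numerical range of (the restriction to the domain `d` of) a linear operator `T`. -/
def numRange (T : H →ₗ[ℂ] H) (d : Submodule ℂ H) : Set ℂ :=
  {z | ∃ x ∈ d, ‖x‖ = 1 ∧ z = (inner ℂ (T x) x : ℂ)}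

/-- The pencil numerical range `W(A,B) = {λ : 0 ∈ closure (W(A - λB))}`. -/
def pencilW (A B : H →ₗ[ℂ] H) (dA : Submodule ℂ H) : Set ℂ :=
  {lam : ℂ | (0 : ℂ) ∈ closure (numRange (A - lam • B) dA)}

/-- The pencil numerical range `w(A,B) = {⟨Ax,x⟩/⟨Bx,x⟩ : x ∈ dom A, ⟨Bx,x⟩ ≠ 0}`. -/
def pencilw (A B : H →ₗ[ℂ] H) (dA : Submodule ℂ H) : Set ℂ :=
  {lam : ℂ | ∃ x ∈ dA, (inner ℂ (B x) x : ℂ) ≠ 0 ∧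
    lam = (inner ℂ (A x) x : ℂ) / (inner ℂ (B x) x : ℂ)}

/-- The essential numerical range of an operator `T` with domain `d`, via weakly null
normalized sequences. -/
def essNumRange (T : H →ₗ[ℂ] H) (d : Submodule ℂ H) : Set ℂ :=
  {z | ∃ x : ℕ → H, (∀ n, x n ∈ d) ∧ (∀ n, ‖x n‖ = 1) ∧
    (∀ y : H, Tendsto (fun n => (inner ℂ y (x n) : ℂ)) atTop (𝓝 0)) ∧
    Tendsto (fun n => (inner ℂ (T (x n)) (x n) : ℂ)) atTop (𝓝 z)}

/-- The pencil essential numerical range `W_e(A,B) = {λ : 0 ∈ W_e(A - λB)}`. -/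
def pencilWe (A B : H →ₗ[ℂ] H) (dA : Submodule ℂ H) : Set ℂ :=
  {lam : ℂ | (0 : ℂ) ∈ essNumRange (A - lam • B) dA}

/-- The pencil essential numerical range `w_e(A,B)`. -/
def pencilwe (A B : H →ₗ[ℂ] H) (dA : Submodule ℂ H) : Set ℂ :=
  {lam : ℂ | ∃ x : ℕ → H, (∀ n, x n ∈ dA) ∧ (∀ n, ‖x n‖ = 1) ∧
    (∀ y : H, Tendsto (fun n => (inner ℂ y (x n) : ℂ)) atTop (𝓝 0)) ∧
    (∀ n, (inner ℂ (B (x n)) (x n) : ℂ) ≠ 0) ∧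
    Tendsto (fun n => (inner ℂ (A (x n)) (x n) : ℂ) / (inner ℂ (B (x n)) (x n) : ℂ))
      atTop (𝓝 lam)}

/-- `σ_app(T) ⊆ ⋂_{B ∈ L(H)} W(BT, B)` for a closed densely defined operator `T`. -/
theorem stmt_16 (T : H →ₗ[ℂ] H) (dT : Submodule ℂ H)
    (hclosed : IsClosed {p : H × H | p.1 ∈ dT ∧ p.2 = T p.1})
    (hdense : Dense (dT : Set H)) :
    {lam : ℂ | ∃ x : ℕ → H, (∀ n, x n ∈ dT) ∧ (∀ n, ‖x n‖ = 1) ∧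
        Tendsto (fun n => ‖T (x n) - lam • x n‖) atTop (𝓝 0)} ⊆
      ⋂ B : H →L[ℂ] H, pencilW ((B : H →ₗ[ℂ] H) ∘ₗ T) (B : H →ₗ[ℂ] H) dT := by
  rintro lam ⟨x, hxd, hxn, hT⟩
  rw [Set.mem_iInter]
  intro B
  have key : Tendsto (fun n => (inner ℂ (((B : H →ₗ[ℂ] H) ∘ₗ T - lam • (B : H →ₗ[ℂ] H)) (x n))
      (x n) : ℂ)) atTop (𝓝 0) := by
    have hb : ∀ n, ‖(inner ℂ (((B : H →ₗ[ℂ] H) ∘ₗ T - lam • (B : H →ₗ[ℂ] H)) (x n)) (x n) : ℂ)‖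
        ≤ ‖B‖ * ‖T (x n) - lam • x n‖ := by
      intro n
      have : ((B : H →ₗ[ℂ] H) ∘ₗ T - lam • (B : H →ₗ[ℂ] H)) (x n)
          = B (T (x n) - lam • x n) := by
        simp [LinearMap.sub_apply, LinearMap.comp_apply, map_sub, map_smul]
      rw [this]
      calc ‖(inner ℂ (B (T (x n) - lam • x n)) (x n) : ℂ)‖
          ≤ ‖B (T (x n) - lam • x n)‖ * ‖x n‖ := norm_inner_le_norm _ _
        _ ≤ ‖B‖ * ‖T (x n) - lam • x n‖ * 1 := by
            rw [hxn n]
            exact mul_le_mul_of_nonneg_right (B.le_opNorm _) zero_le_one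
        _ = ‖B‖ * ‖T (x n) - lam • x n‖ := mul_one _
    have h0 : Tendsto (fun n => ‖B‖ * ‖T (x n) - lam • x n‖) atTop (𝓝 0) := by
      simpa using hT.const_mul ‖B‖
    rw [tendsto_zero_iff_norm_tendsto_zero]
    exact squeeze_zero (fun n => norm_nonneg _) hb h0
  refine mem_closure_of_tendsto key (Eventually.of_forall fun n => ?_)
  exact ⟨x n, hxd n, hxn n, rfl⟩
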